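/- Let θ, θ* be probability distributions on a finite set S⁺ with |S⁺| ≤ 2S (S ≥ 1), V : S⁺ → [0, B_⋆] with B_⋆ > 0, c_min > 0, and suppose for every s' ∈ S⁺: |θ(s') − θ*(s')| ≤ (1/8)·√(c_min·θ*(s')/(S·B_⋆)) + c_min/(4·S·B_⋆). Let μ = ∑_{s''} θ*(s'')·V(s'') and 𝕍 = ∑_{s'} θ*(s')·(V(s') − μ)^2. Then ∑_{s'} (θ(s') − θ*(s'))·(V(s') − μ) ≤ (1/4)·√(c_min·𝕍/B_⋆) + c_min/2. -/

import Mathlib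

theorem known_pair_expectation_diff_bound {Splus : Type*} [Fintype Splus] (S : ℕ) (hS : 1 ≤ S)
    (hcard : Fintype.card Splus ≤ 2 * S)
    (θ θstar : Splus → ℝ)
    (hθ : ∀ s, 0 ≤ θ s) (hθsum : ∑ s, θ s = 1)
    (hθstar : ∀ s, 0 ≤ θstar s) (hθstarsum : ∑ s, θstar s = 1)
    (Bstar cmin : ℝ) (hB : 0 < Bstar) (hc : 0 < cmin)
    (V : Splus → ℝ) (hV : ∀ s, 0 ≤ V s ∧ V s ≤ Bstar)
    (hclose : ∀ s, |θ s - θstar s| ≤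
      (1 / 8) * Real.sqrt (cmin * θstar s / (S * Bstar)) + cmin / (4 * S * Bstar))
    (mu Var : ℝ) (hmu : mu = ∑ s, θstar s * V s)
    (hVar : Var = ∑ s, θstar s * (V s - mu) ^ 2) :
    ∑ s, (θ s - θstar s) * (V s - mu) ≤
      (1 / 4) * Real.sqrt (cmin * Var / Bstar) + cmin / 2 := by
  have hS0 : (0:ℝ) < (S:ℝ) := by exact_mod_cast hS
  have hSB : (0:ℝ) < (S:ℝ) * Bstar := mul_pos hS0 hB
  have hcSB : (0:ℝ) ≤ cmin / ((S:ℝ) * Bstar) := le_of_lt (div_pos hc hSB)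
  have hμ0 : 0 ≤ mu := by
    rw [hmu]; exact Finset.sum_nonneg fun s _ => mul_nonneg (hθstar s) (hV s).1
  have hμB : mu ≤ Bstar := by
    rw [hmu]
    calc ∑ s, θstar s * V s ≤ ∑ s, θstar s * Bstar :=
          Finset.sum_le_sum fun s _ => mul_le_mul_of_nonneg_left (hV s).2 (hθstar s)
      _ = Bstar := by rw [← Finset.sum_mul, hθstarsum, one_mul]
  have habs : ∀ s, |V s - mu| ≤ Bstar := fun s =>
    abs_le.mpr ⟨by linarith [(hV s).1], by linarith [(hV s).2]⟩
  have hVar0 : 0 ≤ Var := by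
    rw [hVar]; exact Finset.sum_nonneg fun s _ => mul_nonneg (hθstar s) (sq_nonneg _)
  set g : Splus → ℝ := fun s => Real.sqrt (θstar s) * |V s - mu| with hg
  have hg0 : ∀ s, 0 ≤ g s := fun s => mul_nonneg (Real.sqrt_nonneg _) (abs_nonneg _)
  have hgsq : ∀ s, g s ^ 2 = θstar s * (V s - mu) ^ 2 := fun s => by
    rw [hg]; simp only []
    rw [mul_pow, Real.sq_sqrt (hθstar s), sq_abs]
  have hCS : (∑ s, g s) ^ 2 ≤ (Fintype.card Splus : ℝ) * Var := by
    have h := Finset.sum_mul_sq_le_sq_mul_sq Finset.univ (fun _ => (1:ℝ)) g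
    simp only [one_mul, one_pow] at h
    calc (∑ s, g s) ^ 2 ≤ (∑ _s : Splus, (1:ℝ)) * ∑ s, g s ^ 2 := h
      _ = (Fintype.card Splus : ℝ) * Var := by
          simp [hVar, hgsq, Finset.sum_congr rfl fun s _ => hgsq s]
  have hsumg : ∑ s, g s ≤ Real.sqrt (2 * S * Var) := by
    have h1 : (∑ s, g s) ^ 2 ≤ 2 * (S:ℝ) * Var := by
      refine hCS.trans (mul_le_mul_of_nonneg_right ?_ hVar0)
      exact_mod_cast hcard
    calc (∑ s, g s) = Real.sqrt ((∑ s, g s) ^ 2) :=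
          (Real.sqrt_sq (Finset.sum_nonneg fun s _ => hg0 s)).symm
      _ ≤ Real.sqrt (2 * S * Var) := Real.sqrt_le_sqrt h1
  have hsumabs : ∑ s, |V s - mu| ≤ 2 * (S:ℝ) * Bstar := by
    calc ∑ s, |V s - mu| ≤ ∑ _s : Splus, Bstar :=
          Finset.sum_le_sum fun s _ => habs s
      _ = (Fintype.card Splus : ℝ) * Bstar := by simp [mul_comm]
      _ ≤ 2 * (S:ℝ) * Bstar := by
          refine mul_le_mul_of_nonneg_right ?_ hB.le
          exact_mod_cast hcard
  have key : ∑ s, (θ s - θstar s) * (V s - mu) ≤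
      (1/8) * Real.sqrt (cmin / ((S:ℝ) * Bstar)) * ∑ s, g s
        + cmin / (4 * (S:ℝ) * Bstar) * ∑ s, |V s - mu| := by
    rw [Finset.mul_sum, Finset.mul_sum, ← Finset.sum_add_distrib]
    refine Finset.sum_le_sum fun s _ => ?_
    have h1 : (θ s - θstar s) * (V s - mu) ≤ |θ s - θstar s| * |V s - mu| := by
      rw [← abs_mul]; exact le_abs_self _
    have hrw : Real.sqrt (cmin * θstar s / ((S:ℝ) * Bstar)) =
        Real.sqrt (cmin / ((S:ℝ) * Bstar)) * Real.sqrt (θstar s) := by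
      rw [← Real.sqrt_mul hcSB]; congr 1; ring
    have h2 : |θ s - θstar s| * |V s - mu| ≤
        ((1/8) * (Real.sqrt (cmin / ((S:ℝ) * Bstar)) * Real.sqrt (θstar s))
          + cmin / (4 * (S:ℝ) * Bstar)) * |V s - mu| := by
      refine mul_le_mul_of_nonneg_right ?_ (abs_nonneg _)
      have := hclose s
      rw [hrw] at this
      exact this
    refine h1.trans (h2.trans (le_of_eq ?_))
    rw [hg]; ring
  have hterm1 : (1/8) * Real.sqrt (cmin / ((S:ℝ) * Bstar)) * ∑ s, g s ≤
      (1/4) * Real.sqrt (cmin * Var / Bstar) := by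
    have h1 : (1/8) * Real.sqrt (cmin / ((S:ℝ) * Bstar)) * ∑ s, g s ≤
        (1/8) * Real.sqrt (cmin / ((S:ℝ) * Bstar)) * Real.sqrt (2 * S * Var) := by
      refine mul_le_mul_of_nonneg_left hsumg ?_
      positivity
    have e1 : Real.sqrt (cmin / ((S:ℝ) * Bstar)) * Real.sqrt (2 * S * Var) =
        Real.sqrt (2 * (cmin * Var / Bstar)) := by
      rw [← Real.sqrt_mul hcSB]
      congr 1
      field_simp
    have e2 : Real.sqrt (2 * (cmin * Var / Bstar)) =
        Real.sqrt 2 * Real.sqrt (cmin * Var / Bstar) := Real.sqrt_mul (by norm_num) _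
    have h2 : Real.sqrt 2 ≤ 2 := by
      nlinarith [Real.sqrt_nonneg 2, Real.sq_sqrt (by norm_num : (0:ℝ) ≤ 2)]
    calc (1/8) * Real.sqrt (cmin / ((S:ℝ) * Bstar)) * ∑ s, g s
        ≤ (1/8) * Real.sqrt (cmin / ((S:ℝ) * Bstar)) * Real.sqrt (2 * S * Var) := h1
      _ = (1/8) * (Real.sqrt 2 * Real.sqrt (cmin * Var / Bstar)) := by
          rw [mul_assoc, e1, e2]
      _ ≤ (1/8) * (2 * Real.sqrt (cmin * Var / Bstar)) := by
          refine mul_le_mul_of_nonneg_left ?_ (by norm_num)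
          exact mul_le_mul_of_nonneg_right h2 (Real.sqrt_nonneg _)
      _ = (1/4) * Real.sqrt (cmin * Var / Bstar) := by ring
  have hterm2 : cmin / (4 * (S:ℝ) * Bstar) * ∑ s, |V s - mu| ≤ cmin / 2 := by
    have h1 : cmin / (4 * (S:ℝ) * Bstar) * ∑ s, |V s - mu| ≤
        cmin / (4 * (S:ℝ) * Bstar) * (2 * (S:ℝ) * Bstar) := by
      refine mul_le_mul_of_nonneg_left hsumabs ?_
      positivity
    refine h1.trans (le_of_eq ?_)
    field_simp
    ring
  linarith [key, hterm1, hterm2]
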